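/- Let 0 < ℓ₂ ≤ ℓ₁ < √3 · ℓ₂. Then there exist h₁ ∈ (0,ℓ₁) and h₂ ∈ (0,ℓ₂) such that simultaneously 0 < π²/(ℓ₁+h₁)² < π²/(ℓ₂+h₂)² < π²/ℓ₁² and π²/(ℓ₂+h₂)² < π²/(ℓ₁+h₁)² + π²/(ℓ₂+h₂)² < π²/ℓ₁². -/
import Mathlib


open Real

lemma aux_exists_a (l1 b : ℝ) (hl1 : 0 < l1) (hbgt : l1 < b)
    (hb43 : 4 * l1 ^ 2 < 3 * b ^ 2) (hbsq : b ^ 2 < 4 * l1 ^ 2) :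
    ∃ a : ℝ, b < a ∧ a < 2 * l1 ∧ π ^ 2 / a ^ 2 + π ^ 2 / b ^ 2 < π ^ 2 / l1 ^ 2 := by
  have hbpos : 0 < b := lt_trans hl1 hbgt
  have hden : 0 < b ^ 2 - l1 ^ 2 := by nlinarith
  have hc2lt : l1 ^ 2 * b ^ 2 / (b ^ 2 - l1 ^ 2) < 4 * l1 ^ 2 := by
    rw [div_lt_iff₀ hden]; nlinarith
  set c2 := l1 ^ 2 * b ^ 2 / (b ^ 2 - l1 ^ 2) with hc2def
  have hc2pos : 0 < c2 := div_pos (by positivity) hden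
  have hmaxlt : max (b ^ 2) c2 < 4 * l1 ^ 2 := max_lt hbsq hc2lt
  set a2 := (max (b ^ 2) c2 + 4 * l1 ^ 2) / 2 with ha2def
  have ha2lt : a2 < 4 * l1 ^ 2 := by rw [ha2def]; linarith
  have ha2gtb : b ^ 2 < a2 := by
    have h1 : b ^ 2 ≤ max (b ^ 2) c2 := le_max_left _ _
    rw [ha2def]; nlinarith
  have ha2gtc : c2 < a2 := by
    have h1 : c2 ≤ max (b ^ 2) c2 := le_max_right _ _
    rw [ha2def]; nlinarith
  have ha2pos : 0 < a2 := lt_trans (by positivity) ha2gtb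
  refine ⟨Real.sqrt a2, ?_, ?_, ?_⟩
  · have h1 : b ^ 2 < Real.sqrt a2 ^ 2 := by
      rw [Real.sq_sqrt (le_of_lt ha2pos)]; exact ha2gtb
    exact lt_of_pow_lt_pow_left₀ 2 (Real.sqrt_nonneg _) h1
  · have h1 : Real.sqrt a2 ^ 2 < (2 * l1) ^ 2 := by
      rw [Real.sq_sqrt (le_of_lt ha2pos)]; nlinarith
    exact lt_of_pow_lt_pow_left₀ 2 (by positivity) h1
  · rw [Real.sq_sqrt (le_of_lt ha2pos)]
    have hpi2 : (0 : ℝ) < π ^ 2 := by positivity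
    have hkey : l1 ^ 2 * b ^ 2 < a2 * (b ^ 2 - l1 ^ 2) := (div_lt_iff₀ hden).mp ha2gtc
    have hkey2 : π ^ 2 * (l1 ^ 2 * b ^ 2) < π ^ 2 * (a2 * (b ^ 2 - l1 ^ 2)) :=
      mul_lt_mul_of_pos_left hkey hpi2
    have hb2pos : (0 : ℝ) < b ^ 2 := by positivity
    have hl2pos : (0 : ℝ) < l1 ^ 2 := by positivity
    rw [div_add_div _ _ (ne_of_gt ha2pos) (ne_of_gt hb2pos),
      div_lt_div_iff₀ (by positivity) hl2pos]
    nlinarith [hkey2]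

/-- If 0 < ℓ₂ ≤ ℓ₁ < √3·ℓ₂, then there exist h₁ ∈ (0,ℓ₁) and
h₂ ∈ (0,ℓ₂) satisfying simultaneously relation (NEW),
0 < π²/(ℓ₁+h₁)² < π²/(ℓ₂+h₂)² < π²/ℓ₁², and relation (mubold),
π²/(ℓ₂+h₂)² < π²/(ℓ₁+h₁)² + π²/(ℓ₂+h₂)² < π²/ℓ₁². -/
theorem exists_shifts_ordering_with_gap_eigenvalue
    (ℓ₁ ℓ₂ : ℝ) (hℓ₂ : 0 < ℓ₂) (hℓ : ℓ₂ ≤ ℓ₁) (hupper : ℓ₁ < Real.sqrt 3 * ℓ₂) :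
    ∃ h₁ ∈ Set.Ioo 0 ℓ₁, ∃ h₂ ∈ Set.Ioo 0 ℓ₂,
      (0 < π ^ 2 / (ℓ₁ + h₁) ^ 2 ∧
       π ^ 2 / (ℓ₁ + h₁) ^ 2 < π ^ 2 / (ℓ₂ + h₂) ^ 2 ∧
       π ^ 2 / (ℓ₂ + h₂) ^ 2 < π ^ 2 / ℓ₁ ^ 2) ∧
      (π ^ 2 / (ℓ₂ + h₂) ^ 2 < π ^ 2 / (ℓ₁ + h₁) ^ 2 + π ^ 2 / (ℓ₂ + h₂) ^ 2 ∧
       π ^ 2 / (ℓ₁ + h₁) ^ 2 + π ^ 2 / (ℓ₂ + h₂) ^ 2 < π ^ 2 / ℓ₁ ^ 2) := by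
  have hℓ₁ : 0 < ℓ₁ := lt_of_lt_of_le hℓ₂ hℓ
  have hspos : (0 : ℝ) < Real.sqrt 3 := Real.sqrt_pos.mpr (by norm_num)
  have hs2 : Real.sqrt 3 ^ 2 = 3 := Real.sq_sqrt (by norm_num)
  have hslt2 : Real.sqrt 3 < 2 := by nlinarith
  have hh2pos : 0 < ℓ₁ / Real.sqrt 3 := div_pos hℓ₁ hspos
  have hh2lt : ℓ₁ / Real.sqrt 3 < ℓ₂ := (div_lt_iff₀ hspos).mpr (by nlinarith)
  -- b := ℓ₂ + ℓ₁/√3 satisfies 2ℓ₁/√3 < b < 2ℓ₂ ≤ 2ℓ₁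
  have hlt2 : ℓ₁ < 2 * (ℓ₁ / Real.sqrt 3) := by
    rw [show 2 * (ℓ₁ / Real.sqrt 3) = 2 * ℓ₁ / Real.sqrt 3 by ring, lt_div_iff₀ hspos]
    nlinarith
  have hbgt : ℓ₁ < ℓ₂ + ℓ₁ / Real.sqrt 3 := by linarith
  have hb43 : 4 * ℓ₁ ^ 2 < 3 * (ℓ₂ + ℓ₁ / Real.sqrt 3) ^ 2 := by
    have h1 : 2 * (ℓ₁ / Real.sqrt 3) < ℓ₂ + ℓ₁ / Real.sqrt 3 := by linarith
    have h2 : (2 * (ℓ₁ / Real.sqrt 3)) ^ 2 < (ℓ₂ + ℓ₁ / Real.sqrt 3) ^ 2 :=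
      pow_lt_pow_left₀ h1 (by positivity) (by norm_num)
    have h3 : (2 * (ℓ₁ / Real.sqrt 3)) ^ 2 = 4 * ℓ₁ ^ 2 / 3 := by
      rw [mul_pow, div_pow, hs2]; ring
    nlinarith
  have hbsq : (ℓ₂ + ℓ₁ / Real.sqrt 3) ^ 2 < 4 * ℓ₁ ^ 2 := by
    have h1 : ℓ₂ + ℓ₁ / Real.sqrt 3 < 2 * ℓ₁ := by linarith
    nlinarith [hh2pos]
  obtain ⟨a, hagtb, halt, hsum⟩ :=
    aux_exists_a ℓ₁ (ℓ₂ + ℓ₁ / Real.sqrt 3) hℓ₁ hbgt hb43 hbsq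
  have hagt : ℓ₁ < a := lt_trans hbgt hagtb
  refine ⟨a - ℓ₁, ⟨by linarith, by linarith⟩, ℓ₁ / Real.sqrt 3, ⟨hh2pos, hh2lt⟩, ?_⟩
  have hea : ℓ₁ + (a - ℓ₁) = a := by ring
  rw [hea]
  have hpi2 : (0 : ℝ) < π ^ 2 := by positivity
  have hb2pos : (0 : ℝ) < (ℓ₂ + ℓ₁ / Real.sqrt 3) ^ 2 :=
    pow_pos (by linarith) 2
  have hl2pos : (0 : ℝ) < ℓ₁ ^ 2 := by positivity
  have hapos : 0 < a := lt_trans hℓ₁ hagt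
  refine ⟨⟨by positivity, ?_, ?_⟩, ?_, hsum⟩
  · exact div_lt_div_of_pos_left hpi2 hb2pos (by nlinarith [hagtb, hbgt, hℓ₁])
  · exact div_lt_div_of_pos_left hpi2 hl2pos (by nlinarith [hbgt, hℓ₁])
  · have h1 : 0 < π ^ 2 / a ^ 2 := by positivity
    linarith
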